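/- Left mode products along distinct modes do not commute in general over the quaternions: there exist quaternion matrices U₁, U₂ ∈ ℍ^{2×2} and a second-order quaternion tensor T ∈ ℍ^{2×2} such that U₁ ×₁ᴸ (U₂ ×₂ᴸ T) ≠ U₂ ×₂ᴸ (U₁ ×₁ᴸ T). -/

import Mathlib

open Matrix
open scoped Quaternion

/-- The left mode-`1` product of a second-order quaternion tensor (a matrix) `T`
with a quaternion matrix `U`: `(U ×₁ᴸ T)_{j i₂} = Σ_{i₁} u_{j i₁} t_{i₁ i₂}`. -/
noncomputable def lprod1 {I₁ I₂ J : ℕ} (U : Matrix (Fin J) (Fin I₁) ℍ[ℝ])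
    (T : Matrix (Fin I₁) (Fin I₂) ℍ[ℝ]) : Matrix (Fin J) (Fin I₂) ℍ[ℝ] :=
  Matrix.of fun j i₂ => ∑ i₁, U j i₁ * T i₁ i₂

/-- The left mode-`2` product of a second-order quaternion tensor (a matrix) `T`
with a quaternion matrix `U`: `(U ×₂ᴸ T)_{i₁ j} = Σ_{i₂} u_{j i₂} t_{i₁ i₂}`. -/
noncomputable def lprod2 {I₁ I₂ J : ℕ} (U : Matrix (Fin J) (Fin I₂) ℍ[ℝ])
    (T : Matrix (Fin I₁) (Fin I₂) ℍ[ℝ]) : Matrix (Fin I₁) (Fin J) ℍ[ℝ] :=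
  Matrix.of fun i₁ j => ∑ i₂, U j i₂ * T i₁ i₂

/-- Left mode products along distinct modes do not commute in general over the
quaternions. -/
theorem exists_lprod_modes_not_comm :
    ∃ (U₁ U₂ T : Matrix (Fin 2) (Fin 2) ℍ[ℝ]),
      lprod1 U₁ (lprod2 U₂ T) ≠ lprod2 U₂ (lprod1 U₁ T) := by
  refine ⟨!![⟨0,1,0,0⟩, 0; 0, 0], !![⟨0,0,1,0⟩, 0; 0, 0], !![1, 0; 0, 0], fun h => ?_⟩
  have h0 := congrFun (congrFun h 0) 0
  simp [lprod1, lprod2, Fin.sum_univ_two] at h0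
  rw [Quaternion.ext_iff] at h0
  erw [Quaternion.imK_mul, Quaternion.imK_mul] at h0
  norm_num at h0
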